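/- Let q be a prime power and C ⊆ F_{q²}^n an F_{q²}-linear code of dimension k (not necessarily self-orthogonal) such that every nonzero codeword of the Hermitian dual C* has Hamming weight at least d. Suppose the puncture code P(C) contains a codeword x of Hamming weight r > 0. Then there exists an F_{q²}-linear code D ⊆ F_{q²}^r of some dimension k̃ ≤ k such that D ⊆ D* (Hermitian dual taken in F_{q²}^r) and every nonzero codeword of D* has Hamming weight at least d. -/

import Mathlib

lemma norm_surj (q : ℕ) (E : Type) [Field E] [Fintype E] [DecidableEq E]
    (hE : Fintype.card E = q ^ 2) (a : E) (ha : a ≠ 0) (haq : a ^ q = a) :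
    ∃ y : E, y ≠ 0 ∧ y ^ (q + 1) = a := by
  have hq2 : 2 ≤ Fintype.card E := Fintype.one_lt_card
  have hq : 2 ≤ q := by
    by_contra h
    interval_cases q <;> omega
  -- work in units
  set u : Eˣ := Units.mk0 a ha with hu
  obtain ⟨g, hg⟩ := IsCyclic.exists_generator (α := Eˣ)
  have hcard : Fintype.card Eˣ = q ^ 2 - 1 := by
    rw [Fintype.card_units, hE]
  have horder : orderOf g = q ^ 2 - 1 := by
    rw [orderOf_eq_card_of_forall_mem_zpowers hg, Nat.card_eq_fintype_card, hcard]
  obtain ⟨s, hs⟩ := hg u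
  simp only at hs
  have hu1 : u ^ (q - 1) = 1 := by
    have : a ^ (q - 1) * a = a := by
      rw [← pow_succ]
      have : q - 1 + 1 = q := by omega
      rw [this, haq]
    have ha1 : a ^ (q - 1) = 1 := by
      field_simp at this
      exact this
    ext
    push_cast
    exact ha1
  -- g ^ (s * (q-1)) = 1
  have h1 : g ^ (s * ((q : ℤ) - 1)) = 1 := by
    rw [zpow_mul, hs]
    have hc : ((q : ℤ) - 1) = ((q - 1 : ℕ) : ℤ) := by
      have : (1:ℕ) ≤ q := by omega
      push_cast [Nat.cast_sub this]
      ring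
    rw [hc, zpow_natCast, hu1]
  have hdvd : ((q : ℤ) ^ 2 - 1) ∣ s * ((q : ℤ) - 1) := by
    have := zpow_eq_one_iff_modEq.mp h1
    rw [Int.ModEq] at this
    have h2 : ((orderOf g : ℤ)) ∣ s * ((q : ℤ) - 1) := Int.dvd_of_emod_eq_zero (by simpa using this)
    rw [horder] at h2
    have : ((q ^ 2 - 1 : ℕ) : ℤ) = (q : ℤ) ^ 2 - 1 := by
      push_cast [Nat.cast_sub (by nlinarith : 1 ≤ q ^ 2)]
      ring
    rwa [this] at h2
  have hfac : ((q : ℤ) ^ 2 - 1) = ((q : ℤ) + 1) * ((q : ℤ) - 1) := by ring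
  have hdvd2 : ((q : ℤ) + 1) ∣ s := by
    rw [hfac] at hdvd
    have hne : ((q : ℤ) - 1) ≠ 0 := by
      have : (2 : ℤ) ≤ q := by exact_mod_cast hq
      omega
    have hdvd' : ((q : ℤ) - 1) * ((q : ℤ) + 1) ∣ ((q : ℤ) - 1) * s := by
      calc ((q : ℤ) - 1) * ((q : ℤ) + 1) = ((q : ℤ) + 1) * ((q : ℤ) - 1) := by ring
        _ ∣ s * ((q : ℤ) - 1) := hdvd
        _ = ((q : ℤ) - 1) * s := by ring
    exact (mul_dvd_mul_iff_left hne).mp hdvd'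
  obtain ⟨t, ht⟩ := hdvd2
  refine ⟨(g ^ t : Eˣ), Units.ne_zero _, ?_⟩
  have : ((g ^ t : Eˣ) : E) ^ (q + 1) = ((g ^ t) ^ (q + 1 : ℕ) : Eˣ) := by push_cast; ring
  rw [this]
  have : (g ^ t) ^ (q + 1 : ℕ) = u := by
    rw [← hs, ht, ← zpow_natCast (g ^ t), ← zpow_mul]
    congr 1
    push_cast
    ring
  rw [this]
  rfl

/-- For `q` a prime power, `C ⊆ F_{q²}^n` an `F_{q²}`-linear code of dimension
`k` whose Hermitian dual has all nonzero codewords of Hamming weight at least `d`, and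
`x ∈ P(C)` of Hamming weight `r > 0`: there exists an `F_{q²}`-linear code `D ⊆ F_{q²}^r`
of dimension `k̃ ≤ k` with `D ⊆ D*` such that every nonzero codeword of `D*` has Hamming
weight at least `d`. -/
theorem stmt_9 (q n k d r : ℕ) (F E : Type) [Field F] [Fintype F] [DecidableEq F]
    [Field E] [Fintype E] [DecidableEq E]
    (hF : Fintype.card F = q) (hE : Fintype.card E = q ^ 2)
    (f : F →+* E) (hf : ∀ x : F, f x ^ q = f x)
    (C : Submodule E (Fin n → E)) (hk : Module.finrank E C = k)
    (hd : ∀ v : Fin n → E, (∀ c ∈ C, ∑ i, (c i) ^ q * v i = 0) → v ≠ 0 → d ≤ hammingNorm v)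
    (x : Fin n → F)
    (hx : ∀ c ∈ C, ∀ c' ∈ C, ∑ i, f (x i) * (c i) ^ q * c' i = 0)
    (hr : hammingNorm x = r) (hr0 : 0 < r) :
    ∃ D : Submodule E (Fin r → E),
      Module.finrank E D ≤ k ∧
      (∀ a ∈ D, ∀ b ∈ D, ∑ i, (a i) ^ q * b i = 0) ∧
      (∀ v : Fin r → E, (∀ c ∈ D, ∑ i, (c i) ^ q * v i = 0) → v ≠ 0 →
        d ≤ hammingNorm v) := by
  classical
  -- choose (q+1)-th roots of f (x i) on the support of x
  have hroot : ∀ i : {i : Fin n // x i ≠ 0}, ∃ y : E, y ≠ 0 ∧ y ^ (q + 1) = f (x i) := by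
    intro ⟨i, hi⟩
    refine norm_surj q E hE _ ?_ (hf (x i))
    simpa using fun h => hi (f.injective (by simpa using h))
  choose y hy0 hy1 using hroot
  -- equivalence between Fin r and the support
  have hcard : Fintype.card {i : Fin n // x i ≠ 0} = r := by
    rw [Fintype.card_subtype, ← hr]; rfl
  let ee : Fin r ≃ {i : Fin n // x i ≠ 0} := (Fintype.equivFinOfCardEq hcard).symm
  -- the rescaling-and-puncturing linear map
  let L : (Fin n → E) →ₗ[E] (Fin r → E) :=
    { toFun := fun c j => y (ee j) * c (ee j)
      map_add' := by intro a b; funext j; simp [mul_add]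
      map_smul' := by intro m a; funext j; simp [smul_eq_mul]; ring }
  refine ⟨C.map L, ?_, ?_, ?_⟩
  · rw [← hk]; exact Submodule.finrank_map_le L C
  · rintro a ⟨c, hc, rfl⟩ b ⟨c', hc', rfl⟩
    have key : ∀ j : Fin r,
        (L c j) ^ q * (L c' j) = f (x (ee j)) * (c (ee j)) ^ q * c' (ee j) := by
      intro j
      show (y (ee j) * c (ee j)) ^ q * (y (ee j) * c' (ee j)) = _
      rw [mul_pow, ← hy1 (ee j)]
      ring
    calc ∑ j, (L c j) ^ q * (L c' j)
        = ∑ j, f (x (ee j)) * (c (ee j)) ^ q * c' (ee j) := by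
          exact Finset.sum_congr rfl fun j _ => key j
      _ = ∑ i : {i : Fin n // x i ≠ 0}, f (x i) * (c i) ^ q * c' i :=
          Fintype.sum_equiv ee _ _ fun j => rfl
      _ = ∑ i : Fin n, f (x i) * (c i) ^ q * c' i := by
          rw [← Finset.sum_subtype (Finset.filter (fun i => x i ≠ 0) Finset.univ)
            (fun i => by simp) (fun i => f (x i) * (c i) ^ q * c' i)]
          refine Finset.sum_filter_of_ne fun i _ hne hxi => ?_
          simp [hxi] at hne
      _ = 0 := hx c hc c' hc'
  · intro v hv hv0
    -- extend v to a vector w on Fin n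
    set w : Fin n → E := fun i =>
      if h : x i ≠ 0 then y ⟨i, h⟩ ^ q * v (ee.symm ⟨i, h⟩) else 0 with hw
    have hworth : ∀ c ∈ C, ∑ i, (c i) ^ q * w i = 0 := by
      intro c hc
      have := hv (L c) (Submodule.mem_map_of_mem hc)
      calc ∑ i : Fin n, (c i) ^ q * w i
          = ∑ i ∈ Finset.filter (fun i => x i ≠ 0) Finset.univ, (c i) ^ q * w i := by
            refine (Finset.sum_filter_of_ne fun i _ hne hxi => ?_).symm
            simp [hw, hxi] at hne
        _ = ∑ i : {i : Fin n // x i ≠ 0}, (c i) ^ q * w i :=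
            Finset.sum_subtype _ (fun i => by simp) _
        _ = ∑ j : Fin r, (c (ee j)) ^ q * w (ee j) :=
            (Fintype.sum_equiv ee _ _ fun j => rfl).symm
        _ = ∑ j : Fin r, (L c j) ^ q * v j := by
            refine Finset.sum_congr rfl fun j _ => ?_
            have hxj : x (ee j) ≠ 0 := (ee j).2
            show (c (ee j)) ^ q * w (ee j) = (y (ee j) * c (ee j)) ^ q * v j
            rw [hw]
            simp only [dif_pos hxj]
            have h1 : (⟨(ee j : Fin n), hxj⟩ : {i : Fin n // x i ≠ 0}) = ee j :=
              Subtype.ext rfl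
            rw [h1, Equiv.symm_apply_apply, mul_pow]
            ring
        _ = 0 := this
    have hwne : w ≠ 0 := by
      obtain ⟨j, hj⟩ := Function.ne_iff.mp hv0
      intro h0
      have hxj : x (ee j) ≠ 0 := (ee j).2
      have : w (ee j) = 0 := congrFun h0 _
      rw [hw] at this
      simp only [dif_pos hxj] at this
      have h1 : (⟨(ee j : Fin n), hxj⟩ : {i : Fin n // x i ≠ 0}) = ee j := Subtype.ext rfl
      rw [h1, Equiv.symm_apply_apply] at this
      rcases mul_eq_zero.mp this with h | h
      · exact hy0 (ee j) (pow_eq_zero_iff (by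
          intro hq0
          simp [hq0] at h) |>.mp h)
      · exact hj h
    have hwle : hammingNorm w ≤ hammingNorm v := by
      unfold hammingNorm
      set φ : Fin n → Fin r := fun i =>
        if h : x i ≠ 0 then ee.symm ⟨i, h⟩ else ⟨0, hr0⟩ with hφ
      refine Finset.card_le_card_of_injOn φ ?_ ?_
      · intro i hi
        simp only [Finset.mem_coe, Finset.mem_filter, Finset.mem_univ, true_and] at hi ⊢
        have hxi : x i ≠ 0 := by
          intro h
          rw [hw] at hi
          simp [h] at hi
        rw [hφ]; simp only [dif_pos hxi]
        intro hvz
        rw [hw] at hi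
        simp [hxi, hvz] at hi
      · intro i hi i' hi' hii
        simp only [Finset.mem_coe, Finset.mem_filter, Finset.mem_univ, true_and] at hi hi'
        have hxi : x i ≠ 0 := by intro h; rw [hw] at hi; simp [h] at hi
        have hxi' : x i' ≠ 0 := by intro h; rw [hw] at hi'; simp [h] at hi'
        rw [hφ] at hii
        simp only [dif_pos hxi, dif_pos hxi'] at hii
        have := ee.symm.injective hii
        exact congrArg Subtype.val this
    exact le_trans (hd w hworth hwne) hwle
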